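/- Let Φ = (1+√5)/2 and let ψ(x) = log_Φ(√5·(log_Φ(√5·x) + x) − 5 + 3/x) − 2. Then the set {⌊n + ψ(n)⌋ : n ∈ ℕ, n ≥ 2} equals the set of integers ≥ 1 that are not Fibonacci numbers. -/

import Mathlib

open Real Nat

noncomputable def EE (x : ℝ) : ℝ :=
  Real.sqrt 5 * (Real.logb goldenRatio (Real.sqrt 5 * x) + x) - 5 + 3 / x

lemma grdef : goldenRatio = (1 + Real.sqrt 5)/2 := rfl

lemma s5l : 2.2360679 < Real.sqrt 5 := by
  rw [show (2.2360679:ℝ) = Real.sqrt (2.2360679^2) by rw [Real.sqrt_sq]; norm_num]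
  exact Real.sqrt_lt_sqrt (by positivity) (by norm_num)

lemma s5u : Real.sqrt 5 < 2.2360680 := by
  rw [show (2.2360680:ℝ) = Real.sqrt (2.2360680^2) by rw [Real.sqrt_sq]; norm_num]
  exact Real.sqrt_lt_sqrt (by positivity) (by norm_num)


lemma binet (n : ℕ) : Real.sqrt 5 * (Nat.fib n : ℝ) = goldenRatio ^ n - goldenConj ^ n := by
  rw [Real.coe_fib_eq]
  have h5 : Real.sqrt 5 ≠ 0 := by positivity
  field_simp

lemma gc_abs : |goldenConj| ≤ 0.618034 := by
  have := s5u
  rw [abs_le]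
  unfold goldenConj
  constructor <;> nlinarith [s5l]

lemma phi_pow (n : ℕ) : goldenRatio ^ (n+1) = Nat.fib n + Nat.fib (n+1) * goldenRatio := by
  have := goldenRatio_mul_fib_succ_add_fib n
  linarith

lemma lb_ge (p q : ℕ) (hq : 0 < q) {x : ℝ} (hx : 0 < x) (h : goldenRatio ^ p ≤ x ^ q) :
    (p : ℝ) ≤ q * Real.logb goldenRatio x := by
  have h1 : Real.logb goldenRatio (goldenRatio ^ p) ≤ Real.logb goldenRatio (x ^ q) :=
    Real.logb_le_logb_of_le one_lt_goldenRatio (by positivity) h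
  rwa [Real.logb_pow, Real.logb_pow, Real.logb_self_eq_one one_lt_goldenRatio, mul_one] at h1

lemma lb_le (p q : ℕ) (hq : 0 < q) {x : ℝ} (hx : 0 < x) (h : x ^ q ≤ goldenRatio ^ p) :
    q * Real.logb goldenRatio x ≤ (p : ℝ) := by
  have h1 : Real.logb goldenRatio (x ^ q) ≤ Real.logb goldenRatio (goldenRatio ^ p) :=
    Real.logb_le_logb_of_le one_lt_goldenRatio (by positivity) h
  rwa [Real.logb_pow, Real.logb_pow, Real.logb_self_eq_one one_lt_goldenRatio, mul_one] at h1

lemma E_mono {a b : ℝ} (ha : 2 ≤ a) (hab : a ≤ b) : EE a ≤ EE b := by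
  unfold EE
  have h5 : (2:ℝ) ≤ Real.sqrt 5 := by nlinarith [s5l]
  have ha0 : 0 < a := by linarith
  have hb0 : 0 < b := by linarith
  have hL : Real.logb goldenRatio (Real.sqrt 5 * a) ≤ Real.logb goldenRatio (Real.sqrt 5 * b) :=
    Real.logb_le_logb_of_le one_lt_goldenRatio (by positivity) (by nlinarith)
  have hd : 3 / a - 3 / b = 3 * (b - a) / (a * b) := by field_simp
  have hab4 : 4 ≤ a * b := by nlinarith
  have : 3 * (b - a) / (a * b) ≤ 3 * (b - a) / 4 := by
    apply div_le_div_of_nonneg_left <;> nlinarith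
  nlinarith [mul_le_mul_of_nonneg_left hab (by positivity : (0:ℝ) ≤ Real.sqrt 5)]

-- fib facts
lemma fib_lb : ∀ k, 4 ≤ k → k ≤ fib k + 1 := by
  intro k hk
  induction k with
  | zero => omega
  | succ m ih =>
    rcases Nat.lt_or_ge m 4 with h | h
    · interval_cases m <;> simp [fib] <;> omega
    · have h1 := ih (by omega)
      have h2 : 1 ≤ fib (m-1) := Nat.fib_pos.mpr (by omega)
      have h3 : fib (m+1) = fib (m-1) + fib m := by
        rw [show m + 1 = (m-1) + 2 by omega, Nat.fib_add_two, show m - 1 + 1 = m by omega]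
      omega

lemma fib_lb2 : ∀ k, 6 ≤ k → k + 7 ≤ fib (k+1) := by
  intro k hk
  induction k with
  | zero => omega
  | succ m ih =>
    rcases Nat.lt_or_ge m 6 with h | h
    · interval_cases m <;> simp [fib] <;> omega
    · have h1 := ih (by omega)
      have h2 : 1 ≤ fib m := Nat.fib_pos.mpr (by omega)
      have h3 : fib (m+1+1) = fib m + fib (m+1) := Nat.fib_add_two
      omega

lemma cover : ∀ n, 2 ≤ n → ∃ k, 4 ≤ k ∧ fib k + 3 ≤ n + k ∧ n + k ≤ fib (k+1) + 1 := by
  intro n hn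
  induction n with
  | zero => omega
  | succ m ih =>
    rcases Nat.lt_or_ge m 2 with h | h
    · have : m = 1 := by omega
      subst this
      exact ⟨4, by norm_num, by simp [fib], by simp [fib]⟩
    · obtain ⟨k, hk4, hk1, hk2⟩ := ih h
      rcases Nat.lt_or_ge (m + k) (fib (k+1) + 1) with h2 | h2
      · exact ⟨k, hk4, by omega, by omega⟩
      · refine ⟨k+1, by omega, by omega, ?_⟩
        have h3 : fib (k+1+1) = fib k + fib (k+1) := Nat.fib_add_two
        have h4 : 3 ≤ fib k := by
          calc 3 = fib 4 := rfl
          _ ≤ fib k := Nat.fib_mono hk4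
        omega

lemma locate : ∀ M, 3 ≤ M → ∃ k, 4 ≤ k ∧ fib k ≤ M ∧ M < fib (k+1) := by
  intro M hM
  induction M with
  | zero => omega
  | succ m ih =>
    rcases Nat.lt_or_ge m 3 with h | h
    · have : m = 2 := by omega
      subst this
      exact ⟨4, by norm_num, by simp [fib], by simp [fib]⟩
    · obtain ⟨k, hk4, hk1, hk2⟩ := ih h
      rcases Nat.lt_or_ge (m+1) (fib (k+1)) with h2 | h2
      · exact ⟨k, hk4, by omega, h2⟩
      · refine ⟨k+1, by omega, by omega, ?_⟩
        have : fib (k+1) < fib (k+1+1) := Nat.fib_lt_fib_succ (by omega)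
        omega

lemma not_fib {k : ℕ} (hk : 4 ≤ k) {N : ℕ} (h1 : fib k < N) (h2 : N < fib (k+1)) :
    ∀ j, fib j ≠ N := by
  intro j hj
  rcases Nat.lt_or_ge k j with h | h
  · have : fib (k+1) ≤ fib j := Nat.fib_mono h
    omega
  · have : fib j ≤ fib k := Nat.fib_mono h
    omega

lemma caseA4 : goldenRatio ^ 4 ≤ EE 2 := by
  have h4 : goldenRatio ^ 4 = fib 3 + fib 4 * goldenRatio := phi_pow 3
  have h11 : goldenRatio ^ 11 = fib 10 + fib 11 * goldenRatio := phi_pow 10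
  have hL : (11:ℝ) ≤ 4 * Real.logb goldenRatio (Real.sqrt 5 * 2) := by
    apply lb_ge 11 4 (by norm_num) (by positivity)
    rw [h11]
    have h5 : Real.sqrt 5 ^ 2 = 5 := Real.sq_sqrt (by norm_num)
    norm_num [fib, grdef]
    nlinarith [s5u]
  rw [h4]
  unfold EE
  norm_num [fib, grdef]
  nlinarith [s5l, hL]

lemma caseA5 : goldenRatio ^ 5 ≤ EE 3 := by
  have h4 : goldenRatio ^ 5 = fib 4 + fib 5 * goldenRatio := phi_pow 4
  have h11 : goldenRatio ^ 19 = fib 18 + fib 19 * goldenRatio := phi_pow 18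
  have hL : (19:ℝ) ≤ 5 * Real.logb goldenRatio (Real.sqrt 5 * 3) := by
    apply lb_ge 19 5 (by norm_num) (by positivity)
    rw [h11]
    have h5 : Real.sqrt 5 ^ 2 = 5 := Real.sq_sqrt (by norm_num)
    have h5' : Real.sqrt 5 ^ 5 = 25 * Real.sqrt 5 := by
      rw [show 5 = 2 + 2 + 1 by rfl, pow_add, pow_add, h5]; ring
    norm_num [fib, grdef]
    nlinarith [s5l, s5u]
  rw [h4]
  unfold EE
  norm_num [fib, grdef]
  nlinarith [s5l, hL]

lemma caseA6 : goldenRatio ^ 6 ≤ EE 5 := by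
  have h4 : goldenRatio ^ 6 = fib 5 + fib 6 * goldenRatio := phi_pow 5
  have h11 : goldenRatio ^ 10 = fib 9 + fib 10 * goldenRatio := phi_pow 9
  have hL : (10:ℝ) ≤ 2 * Real.logb goldenRatio (Real.sqrt 5 * 5) := by
    apply lb_ge 10 2 (by norm_num) (by positivity)
    rw [h11]
    have h5 : Real.sqrt 5 ^ 2 = 5 := Real.sq_sqrt (by norm_num)
    norm_num [fib, grdef]
    nlinarith [s5u]
  rw [h4]
  unfold EE
  norm_num [fib, grdef]
  nlinarith [s5l, hL]

lemma caseA7 : goldenRatio ^ 7 ≤ EE 9 := by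
  have h4 : goldenRatio ^ 7 = fib 6 + fib 7 * goldenRatio := phi_pow 6
  have h11 : goldenRatio ^ 49 = fib 48 + fib 49 * goldenRatio := phi_pow 48
  have hL : (49:ℝ) ≤ 8 * Real.logb goldenRatio (Real.sqrt 5 * 9) := by
    apply lb_ge 49 8 (by norm_num) (by positivity)
    rw [h11]
    have h5 : Real.sqrt 5 ^ 2 = 5 := Real.sq_sqrt (by norm_num)
    have h5' : Real.sqrt 5 ^ 8 = 625 := by
      rw [show 8 = 2*4 by rfl, pow_mul, h5]; norm_num
    norm_num [fib, grdef]
    nlinarith [s5u]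
  rw [h4]
  unfold EE
  norm_num [fib, grdef]
  nlinarith [s5l, hL]

lemma caseB4 : EE 2 < goldenRatio ^ 5 := by
  have h4 : goldenRatio ^ 5 = fib 4 + fib 5 * goldenRatio := phi_pow 4
  have h11 : goldenRatio ^ 7 = fib 6 + fib 7 * goldenRatio := phi_pow 6
  have hL : 2 * Real.logb goldenRatio (Real.sqrt 5 * 2) ≤ (7:ℝ) := by
    apply lb_le 7 2 (by norm_num) (by positivity)
    rw [h11]
    have h5 : Real.sqrt 5 ^ 2 = 5 := Real.sq_sqrt (by norm_num)
    norm_num [fib, grdef]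
    nlinarith [s5l]
  rw [h4]
  unfold EE
  norm_num [fib, grdef]
  nlinarith [s5u, s5l, hL]

lemma caseB5 : EE 4 < goldenRatio ^ 6 := by
  have h4 : goldenRatio ^ 6 = fib 5 + fib 6 * goldenRatio := phi_pow 5
  have h11 : goldenRatio ^ 11 = fib 10 + fib 11 * goldenRatio := phi_pow 10
  have hL : 2 * Real.logb goldenRatio (Real.sqrt 5 * 4) ≤ (11:ℝ) := by
    apply lb_le 11 2 (by norm_num) (by positivity)
    rw [h11]
    have h5 : Real.sqrt 5 ^ 2 = 5 := Real.sq_sqrt (by norm_num)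
    norm_num [fib, grdef]
    nlinarith [s5l]
  rw [h4]
  unfold EE
  norm_num [fib, grdef]
  nlinarith [s5u, s5l, hL]

lemma gc_pow_abs {j k : ℕ} (h : j ≤ k) : |goldenConj ^ k| ≤ 0.618034 ^ j := by
  rw [abs_pow]
  calc |goldenConj| ^ k ≤ |goldenConj| ^ j :=
        pow_le_pow_of_le_one (abs_nonneg _) (le_trans gc_abs (by norm_num)) h
    _ ≤ 0.618034 ^ j := pow_le_pow_left₀ (abs_nonneg _) gc_abs j

lemma Qind (m : ℕ) :
    Real.sqrt 5 * (m + 5) + 1/45 ≤ (goldenRatio - 113/100) * goldenRatio ^ (m + 7) := by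
  induction m with
  | zero =>
    have h7 : goldenRatio ^ 7 = fib 6 + fib 7 * goldenRatio := phi_pow 6
    rw [show (0:ℕ) + 7 = 7 by rfl, h7]
    norm_num [fib, grdef]
    nlinarith [s5l, s5u]
  | succ m ih =>
    have hg : (1.618:ℝ) ≤ goldenRatio := by rw [grdef]; nlinarith [s5l]
    have hpos : (0:ℝ) < goldenRatio ^ (m+7) := by positivity
    have hRHS : Real.sqrt 5 * 5 ≤ (goldenRatio - 113/100) * goldenRatio ^ (m + 7) := by
      nlinarith [s5l, Real.sqrt_nonneg 5]
    have step : (goldenRatio - 113/100) * goldenRatio ^ (m + 7) + Real.sqrt 5 ≤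
        (goldenRatio - 113/100) * goldenRatio ^ (m + 1 + 7) := by
      have : goldenRatio ^ (m+1+7) = goldenRatio ^ (m+7) * goldenRatio := by ring
      rw [this]
      have key : 0 ≤ ((goldenRatio - 113/100) * goldenRatio ^ (m + 7) - Real.sqrt 5 * 5) * (goldenRatio - 1) :=
        mul_nonneg (by linarith) (by linarith)
      have key2 : 0 ≤ Real.sqrt 5 * (5 * goldenRatio - 6) :=
        mul_nonneg (Real.sqrt_nonneg 5) (by linarith)
      nlinarith [key, key2]
    push_cast
    push_cast at ih
    nlinarith [ih, step]

lemma lemA_big (m : ℕ) : goldenRatio ^ (m+8) ≤ EE ((fib (m+8) + 3 - (m+8) : ℕ) : ℝ) := by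
  have hfk : m+8 ≤ fib (m+8) + 1 := fib_lb (m+8) (by omega)
  set n0 : ℕ := fib (m+8) + 3 - (m+8) with hn0
  have hcast : ((n0 : ℕ) : ℝ) = (fib (m+8) : ℝ) + 3 - ((m:ℝ)+8) := by
    have e : n0 = fib (m+8) - (m+5) := by omega
    rw [e, Nat.cast_sub (by omega : m+5 ≤ fib (m+8))]
    push_cast
    ring
  have hn2 : 2 ≤ n0 := by omega
  have hn0R : (2:ℝ) ≤ (n0:ℝ) := by exact_mod_cast hn2
  have hc : Real.sqrt 5 * (n0:ℝ) =
      goldenRatio ^ (m+8) - goldenConj ^ (m+8) - (Real.sqrt 5 * ((m:ℝ)+8) - 3 * Real.sqrt 5) := by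
    rw [hcast]
    have hb := binet (m+8)
    nlinarith [hb]
  have hgc : |goldenConj ^ (m+8)| ≤ 1/45 := by
    calc |goldenConj ^ (m+8)| ≤ 0.618034 ^ 8 := gc_pow_abs (by omega)
      _ ≤ 1/45 := by norm_num
  have hgcl := abs_le.mp hgc
  have hQ := Qind m
  have h1 : (113/100) * goldenRatio ^ (m+7) ≤ Real.sqrt 5 * (n0:ℝ) := by
    rw [hc]
    have hgr : goldenRatio ^ (m+8) = goldenRatio ^ (m+7) * goldenRatio := by ring
    rw [hgr]
    have hQ' : Real.sqrt 5 * ((m:ℝ)+8) - 3*Real.sqrt 5 + 1/45 ≤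
        (goldenRatio - 113/100) * goldenRatio ^ (m + 7) := by
      have : Real.sqrt 5 * ((m:ℝ) + 5) = Real.sqrt 5 * ((m:ℝ)+8) - 3*Real.sqrt 5 := by ring
      linarith [hQ, this.ge.trans_eq rfl, this.le]
    nlinarith [hQ', hgcl.2]
  have hcpos : (0:ℝ) < Real.sqrt 5 * (n0:ℝ) := by positivity
  have hphi_le : goldenRatio ≤ (113/100)^4 := by rw [grdef]; nlinarith [s5u]
  have h2 : goldenRatio ^ (4*m+29) ≤ (Real.sqrt 5 * (n0:ℝ)) ^ 4 := by
    have e1 : ((113/100) * goldenRatio ^ (m+7)) ^ 4 ≤ (Real.sqrt 5 * (n0:ℝ)) ^ 4 :=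
      pow_le_pow_left₀ (by positivity) h1 4
    have e2 : goldenRatio ^ (4*m+29) ≤ ((113/100) * goldenRatio ^ (m+7)) ^ 4 := by
      have e3 : ((113/100) * goldenRatio ^ (m+7)) ^ 4 = (113/100)^4 * goldenRatio ^ ((m+7)*4) := by
        rw [mul_pow, ← pow_mul]
      have e4 : goldenRatio ^ (4*m+29) = goldenRatio ^ ((m+7)*4) * goldenRatio := by
        rw [← pow_succ]
        congr 1
        omega
      rw [e3, e4]
      have hp : (0:ℝ) ≤ goldenRatio ^ ((m+7)*4) := by positivity
      have e5 := mul_le_mul_of_nonneg_left hphi_le hp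
      linarith [e5]
    linarith
  have hL0 := lb_ge (4*m+29) 4 (by norm_num) hcpos h2
  have hL : 4*(m:ℝ) + 29 ≤ 4 * Real.logb goldenRatio (Real.sqrt 5 * (n0:ℝ)) := by
    push_cast at hL0
    linarith
  unfold EE
  have hfrac : (0:ℝ) < 3 / (n0:ℝ) := by positivity
  have hsL : Real.sqrt 5 * ((m:ℝ) + 29/4) ≤
      Real.sqrt 5 * Real.logb goldenRatio (Real.sqrt 5 * (n0:ℝ)) :=
    mul_le_mul_of_nonneg_left (by linarith) (Real.sqrt_nonneg 5)
  have hexp : Real.sqrt 5 * ((m:ℝ) + 29/4) = Real.sqrt 5 * (m:ℝ) + (29/4) * Real.sqrt 5 := by ring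
  have hexp2 : Real.sqrt 5 * ((m:ℝ) + 8) = Real.sqrt 5 * (m:ℝ) + 8 * Real.sqrt 5 := by ring
  rw [hexp] at hsL
  rw [hexp2] at hc
  have hmul : Real.sqrt 5 * ((Real.logb goldenRatio (Real.sqrt 5 * (n0:ℝ))) + (n0:ℝ)) =
      Real.sqrt 5 * Real.logb goldenRatio (Real.sqrt 5 * (n0:ℝ)) + Real.sqrt 5 * (n0:ℝ) := by ring
  rw [hmul]
  linarith [hsL, hc, hgcl.2, hfrac, s5l]

lemma lemB_big (m : ℕ) :
    EE ((fib (m+6+1) + 1 - (m+6) : ℕ) : ℝ) < goldenRatio ^ (m+6+1) := by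
  set k := m + 6 with hk
  have hk6 : 6 ≤ k := by omega
  have hf := fib_lb2 k hk6
  have hcast : ((fib (k+1) + 1 - k : ℕ) : ℝ) = (fib (k+1) : ℝ) + 1 - k := by
    push_cast [Nat.cast_sub (by omega : k ≤ fib (k+1) + 1)]; ring
  set n1 : ℕ := fib (k+1) + 1 - k with hn1
  have hn8 : 8 ≤ n1 := by omega
  have hn8R : (8:ℝ) ≤ (n1:ℝ) := by exact_mod_cast hn8
  have hc : Real.sqrt 5 * (n1:ℝ) =
      goldenRatio ^ (k+1) - goldenConj ^ (k+1) - Real.sqrt 5 * ((k:ℝ) - 1) := by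
    rw [hcast]
    have := binet (k+1)
    push_cast at this ⊢
    nlinarith [this]
  have hgc : |goldenConj ^ (k+1)| ≤ 1/28 := by
    calc |goldenConj ^ (k+1)| ≤ 0.618034 ^ 7 := gc_pow_abs (by omega)
      _ ≤ 1/28 := by norm_num
  have hgcl := abs_le.mp hgc
  have hkR : (6:ℝ) ≤ (k:ℝ) := by exact_mod_cast hk6
  have h1 : Real.sqrt 5 * (n1:ℝ) ≤ goldenRatio ^ (k+1) := by
    rw [hc]
    nlinarith [hgcl.1, s5l, hkR]
  have hcpos : (0:ℝ) < Real.sqrt 5 * (n1:ℝ) := by positivity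
  have hL0 := lb_le (k+1) 1 (by norm_num) hcpos (by rwa [pow_one])
  have hL : Real.logb goldenRatio (Real.sqrt 5 * (n1:ℝ)) ≤ (k:ℝ) + 1 := by
    rw [Nat.cast_one, one_mul, Nat.cast_add, Nat.cast_one] at hL0; exact hL0
  unfold EE
  have hfrac : 3 / (n1:ℝ) ≤ 3/8 := by
    rw [div_le_div_iff₀ (by linarith) (by norm_num)]
    linarith
  have hsL : Real.sqrt 5 * Real.logb goldenRatio (Real.sqrt 5 * (n1:ℝ)) ≤ Real.sqrt 5 * ((k:ℝ) + 1) :=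
    mul_le_mul_of_nonneg_left hL (Real.sqrt_nonneg 5)
  have hexp : Real.sqrt 5 * ((k:ℝ) + 1) = Real.sqrt 5 * (k:ℝ) + Real.sqrt 5 := by ring
  have hexp2 : Real.sqrt 5 * ((k:ℝ) - 1) = Real.sqrt 5 * (k:ℝ) - Real.sqrt 5 := by ring
  rw [hexp] at hsL
  rw [hexp2] at hc
  have hmul : Real.sqrt 5 * ((Real.logb goldenRatio (Real.sqrt 5 * (n1:ℝ))) + (n1:ℝ)) =
      Real.sqrt 5 * Real.logb goldenRatio (Real.sqrt 5 * (n1:ℝ)) + Real.sqrt 5 * (n1:ℝ) := by ring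
  rw [hmul]
  linarith [hsL, hc, hgcl.1, hfrac, s5u]

lemma lemA (k : ℕ) (hk : 4 ≤ k) : goldenRatio ^ k ≤ EE ((fib k + 3 - k : ℕ) : ℝ) := by
  rcases Nat.lt_or_ge k 8 with h | h
  · interval_cases k
    · have e : (fib 4 + 3 - 4 : ℕ) = 2 := rfl
      rw [e]; exact_mod_cast caseA4
    · have e : (fib 5 + 3 - 5 : ℕ) = 3 := rfl
      rw [e]; exact_mod_cast caseA5
    · have e : (fib 6 + 3 - 6 : ℕ) = 5 := rfl
      rw [e]; exact_mod_cast caseA6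
    · have e : (fib 7 + 3 - 7 : ℕ) = 9 := rfl
      rw [e]; exact_mod_cast caseA7
  · obtain ⟨m, rfl⟩ : ∃ m, k = m + 8 := ⟨k - 8, by omega⟩
    exact lemA_big m

lemma lemB (k : ℕ) (hk : 4 ≤ k) : EE ((fib (k+1) + 1 - k : ℕ) : ℝ) < goldenRatio ^ (k+1) := by
  rcases Nat.lt_or_ge k 6 with h | h
  · interval_cases k
    · have e : (fib 5 + 1 - 4 : ℕ) = 2 := rfl
      rw [e]; exact_mod_cast caseB4
    · have e : (fib 6 + 1 - 5 : ℕ) = 4 := rfl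
      rw [e]; exact_mod_cast caseB5
  · obtain ⟨m, rfl⟩ : ∃ m, k = m + 6 := ⟨k - 6, by omega⟩
    exact lemB_big m

lemma bounds (k n : ℕ) (hk : 4 ≤ k) (h1 : fib k + 3 ≤ n + k) (h2 : n + k ≤ fib (k+1) + 1) :
    goldenRatio ^ k ≤ EE (n:ℝ) ∧ EE (n:ℝ) < goldenRatio ^ (k+1) := by
  have hfk := fib_lb k hk
  have hn2 : 2 ≤ n := by
    have h3 : fib k < fib (k+1) := Nat.fib_lt_fib_succ (by omega)
    omega
  have hlo : ((fib k + 3 - k : ℕ) : ℝ) ≤ (n:ℝ) := by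
    have : (fib k + 3 - k : ℕ) ≤ n := by omega
    exact_mod_cast this
  have hhi : (n:ℝ) ≤ ((fib (k+1) + 1 - k : ℕ) : ℝ) := by
    have : n ≤ (fib (k+1) + 1 - k : ℕ) := by omega
    exact_mod_cast this
  have hlo2 : (2:ℝ) ≤ ((fib k + 3 - k : ℕ) : ℝ) := by
    have : (2:ℕ) ≤ (fib k + 3 - k : ℕ) := by omega
    exact_mod_cast this
  constructor
  · exact le_trans (lemA k hk) (E_mono hlo2 hlo)
  · exact lt_of_le_of_lt (E_mono (by exact_mod_cast hn2) hhi) (lemB k hk)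

lemma floor_eq (k n : ℕ) (hk : 4 ≤ k) (h1 : fib k + 3 ≤ n + k) (h2 : n + k ≤ fib (k+1) + 1) :
    ⌊(n:ℝ) + (Real.logb goldenRatio (EE (n:ℝ)) - 2)⌋ = (n:ℤ) + k - 2 := by
  obtain ⟨hA, hB⟩ := bounds k n hk h1 h2
  have hgr1 : (1:ℝ) < goldenRatio := one_lt_goldenRatio
  have hpos : (0:ℝ) < EE (n:ℝ) := lt_of_lt_of_le (by positivity) hA
  have hup : Real.logb goldenRatio (EE (n:ℝ)) < (k:ℝ) + 1 := by
    have := Real.logb_lt_logb hgr1 hpos hB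
    rwa [Real.logb_pow, Real.logb_self_eq_one hgr1, mul_one, Nat.cast_add, Nat.cast_one] at this
  have hlow : (k:ℝ) ≤ Real.logb goldenRatio (EE (n:ℝ)) := by
    have := lb_ge k 1 (by norm_num) hpos (by rwa [pow_one])
    rwa [Nat.cast_one, one_mul] at this
  rw [Int.floor_eq_iff]
  constructor
  · push_cast
    linarith
  · push_cast
    linarith

lemma key (N : ℤ) :
    (∃ n : ℕ, 2 ≤ n ∧ N = ⌊(n:ℝ) + (Real.logb goldenRatio
        (Real.sqrt 5 * (Real.logb goldenRatio (Real.sqrt 5 * (n:ℝ)) + (n:ℝ)) - 5 + 3 / (n:ℝ)) - 2)⌋)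
      ↔ (1 ≤ N ∧ ∀ k : ℕ, (fib k : ℤ) ≠ N) := by
  constructor
  · rintro ⟨n, hn2, hN⟩
    obtain ⟨k, hk4, hk1, hk2⟩ := cover n hn2
    have hfl := floor_eq k n hk4 hk1 hk2
    have hN' : N = (n:ℤ) + k - 2 := by rw [hN]; exact hfl
    have hfk := fib_lb k hk4
    set M : ℕ := n + k - 2 with hM
    have hMN : N = (M:ℤ) := by
      rw [hN']; push_cast [hM, Nat.cast_sub (by omega : 2 ≤ n + k)]; ring
    have hMf1 : fib k < M := by omega
    have hMf2 : M < fib (k+1) := by omega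
    constructor
    · have : 3 ≤ fib k := by
        calc 3 = fib 4 := rfl
        _ ≤ fib k := Nat.fib_mono hk4
      omega
    · intro j hj
      exact not_fib hk4 hMf1 hMf2 j (by omega)
  · rintro ⟨hN1, hNf⟩
    set M : ℕ := N.toNat with hM
    have hMN : (M:ℤ) = N := Int.toNat_of_nonneg (by omega)
    have hMf : ∀ j, fib j ≠ M := by
      intro j hj
      exact hNf j (by rw [← hMN, hj])
    have hM4 : 4 ≤ M := by
      have h1 : fib 2 ≠ M := hMf 2
      have h2 : fib 3 ≠ M := hMf 3
      have h3 : fib 4 ≠ M := hMf 4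
      have : 1 ≤ M := by omega
      simp [fib] at h1 h2 h3
      omega
    obtain ⟨k, hk4, hk1, hk2⟩ := locate M (by omega)
    have hk1' : fib k < M := lt_of_le_of_ne hk1 (hMf k)
    have hfk := fib_lb k hk4
    refine ⟨M + 2 - k, by omega, ?_⟩
    have hfl := floor_eq k (M + 2 - k) hk4 (by omega) (by omega)
    have : ⌊((M + 2 - k : ℕ):ℝ) + (Real.logb goldenRatio (EE ((M + 2 - k : ℕ):ℝ)) - 2)⌋
        = ((M + 2 - k : ℕ):ℤ) + k - 2 := hfl
    rw [show (((M + 2 - k : ℕ)):ℤ) + (k:ℤ) - 2 = (M:ℤ) by push_cast [Nat.cast_sub (by omega : k ≤ M + 2)]; ring, hMN] at this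
    rw [← this]
    rfl

theorem stmt11 :
    let Φ : ℝ := (1 + Real.sqrt 5) / 2
    let ψ : ℝ → ℝ := fun x => Real.logb Φ (Real.sqrt 5 * (Real.logb Φ (Real.sqrt 5 * x) + x) - 5 + 3 / x) - 2
    {N : ℤ | ∃ n : ℕ, 2 ≤ n ∧ N = ⌊(n : ℝ) + ψ n⌋} =
      {N : ℤ | 1 ≤ N ∧ ∀ k : ℕ, (Nat.fib k : ℤ) ≠ N} := by
  intro Φ ψ
  ext N
  simp only [Set.mem_setOf_eq]
  exact key N
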